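/- Let m ≥ 1 and let A ∈ GL_m(ℤ) act on M = ℤ^m. Suppose that for every nonempty finite multiset of complex eigenvalues of the matrix A − Id (i.e., roots of its characteristic polynomial over ℂ, repetitions allowed), the product of the multiset is neither 1 nor −1. Then ⋂_{k∈ℕ} range((1 − A)^k : ℤ^m → ℤ^m) = 0; that is, M is a residually nilpotent ℤ[⟨t⟩]-module for the action of t via A. -/

import Mathlib

open Polynomial Matrix

section Aux

variable {n : Type*} [Fintype n] [DecidableEq n]

lemma resNilpAux_eval_charpoly {K : Type*} [CommRing K] (M : Matrix n n K) (w : K) :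
    M.charpoly.eval w = (w • (1 : Matrix n n K) - M).det := by
  rw [Matrix.charpoly, ← Polynomial.coe_evalRingHom, RingHom.map_det]
  congr 1
  ext i j
  by_cases h : i = j <;>
    simp [Matrix.charmatrix_apply, h, Matrix.one_apply, Matrix.diagonal_apply]

lemma resNilpAux_aeval_restrict_coe {R M : Type*} [CommRing R] [AddCommGroup M] [Module R M]
    (f : M →ₗ[R] M) (p : Submodule R M) (h : ∀ x ∈ p, f x ∈ p) (q : R[X]) (x : p) :
    ((Polynomial.aeval (f.restrict h) q) x : M) = (Polynomial.aeval f q) (x : M) := by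
  induction q using Polynomial.induction_on' with
  | add r s hr hs => simp [hr, hs]
  | monomial k a =>
      simp only [aeval_monomial, Module.End.mul_apply, Module.algebraMap_end_apply,
        Submodule.coe_smul]
      congr 1
      rw [Module.End.pow_restrict, LinearMap.restrict_coe_apply]

lemma resNilpAux_toLin_pow {R : Type*} [CommSemiring R] (M : Matrix n n R) (k : ℕ)
    (x : n → R) : ((Matrix.toLinAlgEquiv' M) ^ k) x = (M ^ k) *ᵥ x := by
  induction k with
  | zero => simp
  | succ k ih =>
      rw [pow_succ', Module.End.mul_apply, ih, Matrix.toLinAlgEquiv'_apply,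
        Matrix.mulVec_mulVec, ← pow_succ']

end Aux

set_option maxHeartbeats 1000000 in
set_option synthInstance.maxHeartbeats 400000 in
/-- Let `A ∈ GL_m(ℤ)` act on `M = ℤ^m`. If the product of every nonempty finite
multiset of complex eigenvalues of `A - Id` (roots of its characteristic polynomial
over `ℂ`, repetitions allowed) is neither `1` nor `-1`, then
`⋂_k range((1 - A)^k) = 0`, i.e. `M` is a residually nilpotent
`ℤ[⟨t⟩]`-module for `t` acting via `A`. -/
theorem residually_nilpotent_of_eigenvalue_products (m : ℕ) (hm : 1 ≤ m)
    (A : Matrix (Fin m) (Fin m) ℤ) (hA : IsUnit A.det)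
    (heig : ∀ s : Multiset ℂ, s ≠ 0 →
      (∀ z ∈ s, (Polynomial.aeval z) (A - 1).charpoly = 0) →
      s.prod ≠ 1 ∧ s.prod ≠ -1) :
    (⨅ k : ℕ, LinearMap.range ((Matrix.toLin' (1 - A)) ^ k)) = ⊥ := by
  classical
  set B' : Module.End ℤ (Fin m → ℤ) := Matrix.toLinAlgEquiv' (A - 1) with hB'def
  -- the ranges of powers of `toLin' (1-A)` and of `B' = toLin' (A-1)` agree
  have e1 : Matrix.toLin' (A - 1) = B' := by
    rw [hB'def]
    exact LinearMap.ext fun x => by rw [Matrix.toLin'_apply, Matrix.toLinAlgEquiv'_apply]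
  have hBneg : Matrix.toLin' (1 - A) = -B' := by
    rw [show (1 : Matrix (Fin m) (Fin m) ℤ) - A = -(A - 1) from (neg_sub A 1).symm,
      map_neg, e1]
  have hrange : ∀ k : ℕ, LinearMap.range ((Matrix.toLin' (1 - A)) ^ k)
      = LinearMap.range (B' ^ k) := by
    intro k
    rw [hBneg]
    show LinearMap.range ((-B' : Module.End ℤ (Fin m → ℤ)) ^ k) = LinearMap.range (B' ^ k)
    rcases Nat.even_or_odd k with h | h
    · rw [h.neg_pow]
    · rw [h.neg_pow]
      exact LinearMap.range_neg _
  simp_rw [hrange]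
  set L : Submodule ℤ (Fin m → ℤ) := ⨅ k : ℕ, LinearMap.range (B' ^ k) with hLdef
  show L = ⊥
  -- monotonicity of ranges of powers
  have hmono : ∀ {j k : ℕ}, j ≤ k → LinearMap.range (B' ^ k) ≤ LinearMap.range (B' ^ j) := by
    intro j k h
    obtain ⟨d, rfl⟩ := Nat.exists_eq_add_of_le h
    rw [pow_add, Module.End.mul_eq_comp]
    exact LinearMap.range_comp_le_range _ _
  -- power application as matrix mulVec
  have hpow : ∀ (k : ℕ) (x : Fin m → ℤ), (B' ^ k) x = ((A - 1) ^ k) *ᵥ x := by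
    intro k x
    rw [hB'def]
    exact resNilpAux_toLin_pow _ _ _
  -- rational version
  set Aq : Matrix (Fin m) (Fin m) ℚ := (A - 1).map (Int.cast) with hAqdef
  set Bq : Module.End ℚ (Fin m → ℚ) := Matrix.toLinAlgEquiv' Aq with hBqdef
  set c : (Fin m → ℤ) → (Fin m → ℚ) := fun x i => ((x i : ℤ) : ℚ) with hcdef
  have hc_inj : Function.Injective c := by
    intro x y h
    funext i
    have h2 : ((x i : ℤ) : ℚ) = ((y i : ℤ) : ℚ) := congrFun h i
    exact_mod_cast h2
  have hc_sub : ∀ x y, c x - c y = c (x - y) := by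
    intro x y; funext i; simp [hcdef]
  have hmapk : ∀ k : ℕ, ((A - 1) ^ k).map (Int.cast : ℤ → ℚ) = Aq ^ k := by
    intro k
    have h := map_pow ((Int.castRingHom ℚ).mapMatrix) (A - 1) k
    simp only [RingHom.mapMatrix_apply, Int.coe_castRingHom] at h
    rw [h, hAqdef]
  have hck : ∀ (k : ℕ) (x : Fin m → ℤ), c ((B' ^ k) x) = (Bq ^ k) (c x) := by
    intro k x
    have hq : (Bq ^ k) (c x) = (Aq ^ k) *ᵥ (c x) := by
      rw [hBqdef]; exact resNilpAux_toLin_pow _ _ _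
    rw [hq, hpow]
    funext i
    have h := RingHom.map_mulVec (Int.castRingHom ℚ) ((A - 1) ^ k) x i
    simp only [Int.coe_castRingHom] at h
    rw [show c (((A - 1) ^ k) *ᵥ x) i = ((((A - 1) ^ k) *ᵥ x) i : ℚ) from rfl, h, hmapk]
    rfl
  -- Fitting decomposition over ℚ
  obtain ⟨N, hN1, hNdisj⟩ : ∃ N : ℕ, 1 ≤ N ∧
      Disjoint (LinearMap.ker (Bq ^ N)) (LinearMap.range (Bq ^ N)) := by
    obtain ⟨N, hN⟩ :=
      ((Bq.eventually_disjoint_ker_pow_range_pow).and (Filter.eventually_ge_atTop 1)).exists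
    exact ⟨N, hN.2, hN.1⟩
  -- key injectivity of B' on range (B'^N)
  have hinj : ∀ x ∈ LinearMap.range (B' ^ N), ∀ y ∈ LinearMap.range (B' ^ N),
      B' x = B' y → x = y := by
    rintro x ⟨u, rfl⟩ y ⟨v, rfl⟩ hxy
    have h1 : c ((B' ^ N) u) - c ((B' ^ N) v) ∈ LinearMap.range (Bq ^ N) :=
      Submodule.sub_mem _ ⟨c u, (hck N u).symm⟩ ⟨c v, (hck N v).symm⟩
    have hone : ∀ z, c (B' z) = Bq (c z) := by
      intro z
      have h := hck 1 z
      rwa [pow_one, pow_one] at h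
    have h2 : (Bq ^ N) (c ((B' ^ N) u) - c ((B' ^ N) v)) = 0 := by
      have hker : Bq (c ((B' ^ N) u) - c ((B' ^ N) v)) = 0 := by
        rw [hc_sub _ _, ← hone, map_sub, hxy, sub_self]
        funext i; simp [hcdef]
      obtain ⟨N', rfl⟩ := Nat.exists_eq_add_of_le hN1
      rw [Nat.add_comm 1 N'] at hker ⊢
      rw [pow_succ, Module.End.mul_apply, hker, map_zero]
    have := Submodule.disjoint_def.mp hNdisj _ (LinearMap.mem_ker.mpr h2) h1
    exact hc_inj (by rwa [sub_eq_zero] at this)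
  -- membership in L
  have hmemL : ∀ x : Fin m → ℤ, x ∈ L ↔ ∀ k : ℕ, x ∈ LinearMap.range (B' ^ k) := by
    intro x; exact Submodule.mem_iInf _
  -- B' maps L into L
  have hstab : ∀ x ∈ L, B' x ∈ L := by
    intro x hx
    rw [hmemL] at hx ⊢
    intro k
    obtain ⟨u, hu⟩ := hx k
    exact ⟨B' u, by rw [← Module.End.mul_apply, ← pow_succ, pow_succ', Module.End.mul_apply, hu]⟩
  set f' : Module.End ℤ L := B'.restrict hstab with hf'def
  -- f' is bijective
  have hf'inj : Function.Injective f' := by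
    intro x y hxy
    have hxy' : B' (x : Fin m → ℤ) = B' (y : Fin m → ℤ) := by
      have := congrArg (Subtype.val) hxy
      simpa [hf'def] using this
    exact Subtype.ext (hinj _ ((hmemL _).mp x.2 N) _ ((hmemL _).mp y.2 N) hxy')
  have hf'surj : Function.Surjective f' := by
    rintro ⟨x, hx⟩
    have hx' := (hmemL x).mp hx
    obtain ⟨w, hw⟩ := hx' (N + 1)
    have hzmem : ∀ k : ℕ, (B' ^ N) w ∈ LinearMap.range (B' ^ k) := by
      intro k
      rcases le_or_gt k N with h | h
      · exact hmono h ⟨w, rfl⟩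
      · obtain ⟨u, hu⟩ := hx' (k + 1)
        have h1 : B' ((B' ^ k) u) = x := by
          rw [← Module.End.mul_apply, ← pow_succ', hu]
        have h2 : B' ((B' ^ N) w) = x := by
          rw [← Module.End.mul_apply, ← pow_succ', hw]
        have := hinj _ (⟨w, rfl⟩ : (B' ^ N) w ∈ LinearMap.range (B' ^ N)) _
          (hmono h.le ⟨u, rfl⟩) (h2.trans h1.symm)
        rw [this]
        exact ⟨u, rfl⟩
    refine ⟨⟨(B' ^ N) w, (hmemL _).mpr hzmem⟩, ?_⟩
    apply Subtype.ext
    show B' ((B' ^ N) w) = x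
    rw [← Module.End.mul_apply, ← pow_succ', hw]
  have hf'unit : IsUnit f' := (Module.End.isUnit_iff f').mpr ⟨hf'inj, hf'surj⟩
  -- now suppose L ≠ ⊥ and derive a contradiction
  by_contra hLne
  haveI : Nontrivial L := Submodule.nontrivial_iff_ne_bot.mpr hLne
  set ι := Module.Free.ChooseBasisIndex ℤ L with hιdef
  set b : Module.Basis ι ℤ L := Module.Free.chooseBasis ℤ L with hbdef
  haveI : Nonempty ι := by
    rcases isEmpty_or_nonempty ι with h | h
    · exact absurd (b.repr.toEquiv.subsingleton) (not_subsingleton L)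
    · exact h
  set C : Matrix ι ι ℤ := LinearMap.toMatrixAlgEquiv b f' with hCdef
  have hCunit : IsUnit C.det :=
    (Matrix.isUnit_iff_isUnit_det C).mp (hf'unit.map (LinearMap.toMatrixAlgEquiv b))
  set g : ℤ[X] := (A - 1).charpoly with hgdef
  -- Cayley-Hamilton transfers
  have h0 : Polynomial.aeval B' g = 0 := by
    rw [hB'def, hgdef,
      Polynomial.aeval_algHom_apply Matrix.toLinAlgEquiv' (A - 1) ((A - 1).charpoly),
      Matrix.aeval_self_charpoly, map_zero]
  have h1 : Polynomial.aeval f' g = 0 := by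
    apply LinearMap.ext
    intro x
    apply Subtype.ext
    rw [hf'def]
    show ((Polynomial.aeval (B'.restrict hstab) g) x : Fin m → ℤ) = _
    rw [resNilpAux_aeval_restrict_coe B' L hstab g x, h0]
    simp
  have h2 : Polynomial.aeval C g = 0 := by
    rw [hCdef, Polynomial.aeval_algHom_apply (LinearMap.toMatrixAlgEquiv b) f' g,
      h1, map_zero]
  set Cc : Matrix ι ι ℂ := C.map (Int.cast) with hCcdef
  have h3 : Polynomial.aeval Cc g = 0 := by
    have hφ : (Int.castRingHom ℂ).mapMatrix (Polynomial.aeval C g) = Polynomial.aeval Cc g := by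
      rw [Polynomial.aeval_def, Polynomial.aeval_def, Polynomial.hom_eval₂]
      have hcomp : ((Int.castRingHom ℂ).mapMatrix).comp (algebraMap ℤ (Matrix ι ι ℤ))
          = algebraMap ℤ (Matrix ι ι ℂ) := Subsingleton.elim _ _
      have hCeq : (Int.castRingHom ℂ).mapMatrix C = Cc := by
        rw [RingHom.mapMatrix_apply, Int.coe_castRingHom, hCcdef]
      rw [hcomp, hCeq]
    rw [← hφ, h2, map_zero]
  set gc : ℂ[X] := g.map (Int.castRingHom ℂ) with hgcdef
  have h4 : Polynomial.aeval Cc gc = 0 := by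
    rw [hgcdef, ← algebraMap_int_eq, Polynomial.aeval_map_algebraMap, h3]
  set pc : ℂ[X] := Cc.charpoly with hpcdef
  have hpc_monic : pc.Monic := Cc.charpoly_monic
  have hpc_map : pc = C.charpoly.map (Int.castRingHom ℂ) := by
    rw [hpcdef, hCcdef, show (Int.cast : ℤ → ℂ) = ⇑(Int.castRingHom ℂ) from rfl,
      Matrix.charpoly_map]
  set s : Multiset ℂ := pc.roots with hsdef
  have hs_card : Multiset.card s = Fintype.card ι := by
    rw [hsdef, Polynomial.splits_iff_card_roots.mp (IsAlgClosed.splits pc), hpc_map,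
      (C.charpoly_monic).natDegree_map, Matrix.charpoly_natDegree_eq_dim]
  have hs0 : s ≠ 0 := by
    intro h
    rw [h, Multiset.card_zero] at hs_card
    exact absurd hs_card.symm (Nat.pos_iff_ne_zero.mp Fintype.card_pos)
  -- every root of pc is a root of g
  have hroots : ∀ z ∈ s, (Polynomial.aeval z) g = 0 := by
    intro w hw
    have hroot : pc.IsRoot w := (Polynomial.mem_roots hpc_monic.ne_zero).mp hw
    have hdet : (w • (1 : Matrix ι ι ℂ) - Cc).det = 0 := by
      rw [← resNilpAux_eval_charpoly]
      exact hroot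
    obtain ⟨v, hv0, hvz⟩ := Matrix.exists_mulVec_eq_zero_iff.mpr hdet
    have hev : Module.End.HasEigenvector (Matrix.toLinAlgEquiv' Cc) w v := by
      refine ⟨Module.End.mem_eigenspace_iff.mpr ?_, hv0⟩
      have : Cc *ᵥ v = w • v := by
        have := sub_eq_zero.mp (by rwa [Matrix.sub_mulVec] at hvz)
        rw [← this, Matrix.smul_mulVec, Matrix.one_mulVec]
      rw [Matrix.toLinAlgEquiv'_apply, this]
    have h5 : Polynomial.aeval (Matrix.toLinAlgEquiv' Cc) gc = 0 := by
      rw [Polynomial.aeval_algHom_apply Matrix.toLinAlgEquiv' Cc gc, h4, map_zero]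
    have h6 := Module.End.aeval_apply_of_hasEigenvector (p := gc) hev
    rw [h5] at h6
    have h7 : gc.eval w = 0 := by
      rcases smul_eq_zero.mp h6.symm with h | h
      · exact h
      · exact absurd h hv0
    rw [hgcdef, Polynomial.eval_map] at h7
    rw [Polynomial.aeval_def, algebraMap_int_eq]
    exact h7
  -- product of the roots is the determinant
  have hfact : pc = (s.map fun a => X - Polynomial.C a).prod :=
    (IsAlgClosed.splits pc).eq_prod_roots_of_monic hpc_monic
  have heval0 : pc.eval 0 = (-1) ^ Fintype.card ι * s.prod := by
    rw [hfact, Polynomial.eval_multiset_prod, Multiset.map_map]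
    have : (s.map fun a => Polynomial.eval 0 (X - Polynomial.C a)) = s.map (fun a => -a) := by
      apply Multiset.map_congr rfl
      intro a _
      simp
    rw [Function.comp_def, this, show (fun a : ℂ => -a) = Neg.neg from rfl,
      Multiset.prod_map_neg, hs_card]
  have hcoeff : pc.eval 0 = ((C.charpoly.coeff 0 : ℤ) : ℂ) := by
    rw [← Polynomial.coeff_zero_eq_eval_zero, hpc_map, Polynomial.coeff_map]
    rfl
  have hdet_coeff : C.det = (-1) ^ Fintype.card ι * C.charpoly.coeff 0 :=
    Matrix.det_eq_sign_charpoly_coeff C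
  have hprod : s.prod = ((C.det : ℤ) : ℂ) := by
    have h8 : ((C.det : ℤ) : ℂ) = (-1) ^ Fintype.card ι * ((C.charpoly.coeff 0 : ℤ) : ℂ) := by
      rw [hdet_coeff]; push_cast; ring
    rw [h8, ← hcoeff, heval0, ← mul_assoc, ← mul_pow]
    simp
  obtain ⟨h9, h10⟩ := heig s hs0 hroots
  rcases Int.isUnit_iff.mp hCunit with h | h
  · rw [h] at hprod; exact h9 (by simpa using hprod)
  · rw [h] at hprod; exact h10 (by simpa using hprod)
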